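/- Assume lim_{N→∞} d_U(A_N, A) = 0. Then for every function f : ℝ^r → ℝ of class C² and every T > 0, both sup_{N ≥ 1} sup_{0 ≤ t ≤ T} sup_{p ∈ K_N} | N·(S_{N,[Nt]} f(p) − f(p)) | < ∞ and lim_{N→∞} sup_{0 ≤ t ≤ T} sup_{p ∈ K_N} | S_{N,[Nt]} f(p) − f(p) | = 0 hold. -/

import Mathlib

open scoped BigOperators NNReal
open Finset MeasureTheory

noncomputable section

/-- A Q-matrix: nonnegative off-diagonal entries, rows summing to zero. -/
def IsQMatrix {r : ℕ} (M : Matrix (Fin r) (Fin r) ℝ) : Prop :=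
  (∀ i j, i ≠ j → 0 ≤ M i j) ∧ ∀ i, ∑ j, M i j = 0

/-- A stochastic matrix: nonnegative entries, rows summing to one. -/
def IsStochastic {r : ℕ} (M : Matrix (Fin r) (Fin r) ℝ) : Prop :=
  (∀ i j, 0 ≤ M i j) ∧ ∀ i, ∑ j, M i j = 1

/-- Frobenius norm of an `r×r` real matrix. -/
def frobNorm {r : ℕ} (M : Matrix (Fin r) (Fin r) ℝ) : ℝ :=
  Real.sqrt (∑ i, ∑ j, (M i j) ^ 2)

/-- The metric `d_U(x,y) = ∫₀^∞ e^{-u} sup_{0≤t≤u} (‖x(t)−y(t)‖ ∧ 1) du` on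
matrix-valued paths. -/
def dU {r : ℕ} (x y : ℝ → Matrix (Fin r) (Fin r) ℝ) : ℝ :=
  ∫ u in Set.Ioi (0 : ℝ),
    Real.exp (-u) * sSup ((fun t => min (frobNorm (x t - y t)) 1) '' Set.Icc 0 u)

/-- Multinomial probability weight `(∑β)!/∏ β_j! · ∏ p_j^{β_j}`. -/
def multinomialWeight {r : ℕ} (p : Fin r → ℝ) (β : Fin r → ℕ) : ℝ :=
  (Nat.multinomial Finset.univ β : ℝ) * ∏ j, p j ^ β j

/-- The internal-dynamics transition operator: `SOp N P f n = S_{N} f(n/N)`, where each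
of the `n i` agents of type `i` independently moves to type `j` with probability `P i j`,
the sum running over all arrays `ξ ∈ ℤ₊^{r×r}` whose `i`-th row sums to `n i`. -/
def SOp {r : ℕ} (N : ℕ) (P : Matrix (Fin r) (Fin r) ℝ) (f : (Fin r → ℝ) → ℝ)
    (n : Fin r → ℕ) : ℝ :=
  ∑ ξ ∈ Fintype.piFinset fun i => Finset.Nat.antidiagonalTuple r (n i),
    (∏ i, multinomialWeight (P i) (ξ i)) * f fun j => ((∑ i, ξ i j : ℕ) : ℝ) / N

/-- The multinomial-sampling operator `T_N f(p) = E[f(M/N)]`, `M ~ multinomial(N,p)`. -/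
def TOp {r : ℕ} (N : ℕ) (f : (Fin r → ℝ) → ℝ) (p : Fin r → ℝ) : ℝ :=
  ∑ α ∈ Finset.Nat.antidiagonalTuple r N,
    multinomialWeight p α * f fun i => (α i : ℝ) / N

/-- One-step operator of internal dynamics followed by multinomial sampling:
`U_{N,k} f = S_{N,k}(T_N f)`. -/
def UOp {r : ℕ} (N : ℕ) (P : Matrix (Fin r) (Fin r) ℝ) (f : (Fin r → ℝ) → ℝ)
    (n : Fin r → ℕ) : ℝ :=
  SOp N P (TOp N f) n

/-- The first-order generator `G_A(t) f(p) = ∑_{i,j} pᵢ aᵢⱼ(t) ∂f/∂xⱼ(p)`,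
here taking the matrix `A(t)` as argument. -/
def GA {r : ℕ} (M : Matrix (Fin r) (Fin r) ℝ) (f : (Fin r → ℝ) → ℝ) (p : Fin r → ℝ) : ℝ :=
  ∑ i, ∑ j, p i * M i j * fderiv ℝ f p (Pi.single j 1)

/-- The Wright–Fisher generator
`G_B f(p) = (1/2) ∑_{i,j} pᵢ(δᵢⱼ − pⱼ) ∂²f/∂xᵢ∂xⱼ(p)`. -/
def GB {r : ℕ} (f : (Fin r → ℝ) → ℝ) (p : Fin r → ℝ) : ℝ :=
  (1 / 2) * ∑ i, ∑ j,
    p i * ((if i = j then (1 : ℝ) else 0) - p j) *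
      fderiv ℝ (fun x => fderiv ℝ f x (Pi.single j 1)) p (Pi.single i 1)


open scoped Nat

lemma mult_succ {r : ℕ} (γ : Fin r → ℕ) (j : Fin r) (m : ℕ) (hγ : ∑ i, γ i = m) :
    (γ j + 1) * Nat.multinomial Finset.univ (γ + Pi.single j 1) =
      (m + 1) * Nat.multinomial Finset.univ γ := by
  set δ : Fin r → ℕ := γ + Pi.single j 1 with hδdef
  have hδ : ∀ i, δ i = γ i + (Pi.single j 1 : Fin r → ℕ) i := fun _ => rfl
  have h1 : (∏ i, Nat.factorial (δ i)) = (γ j + 1) * ∏ i, Nat.factorial (γ i) := by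
    rw [← Finset.mul_prod_erase Finset.univ _ (Finset.mem_univ j),
      ← Finset.mul_prod_erase Finset.univ (fun i => Nat.factorial (γ i)) (Finset.mem_univ j)]
    have he : ∀ i ∈ Finset.univ.erase j,
        Nat.factorial (δ i) = Nat.factorial (γ i) := by
      intro i hi
      rw [hδ i, Pi.single_eq_of_ne (Finset.ne_of_mem_erase hi)]
      simp
    rw [Finset.prod_congr rfl he, hδ j, Pi.single_eq_same]
    simp [Nat.factorial_succ, mul_assoc]
  have h2 := Nat.multinomial_spec Finset.univ δ
  have h3 := Nat.multinomial_spec Finset.univ γ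
  have hs : ∑ i, δ i = m + 1 := by
    simp only [hδ, Finset.sum_add_distrib, hγ]
    simp
  rw [hs, h1] at h2
  rw [hγ] at h3
  have key : (∏ i, Nat.factorial (γ i)) * ((γ j + 1) * Nat.multinomial Finset.univ δ)
      = (∏ i, Nat.factorial (γ i)) * ((m + 1) * Nat.multinomial Finset.univ γ) := by
    have e1 : (∏ i, Nat.factorial (γ i)) * ((γ j + 1) * Nat.multinomial Finset.univ δ)
        = ((γ j + 1) * ∏ i, Nat.factorial (γ i)) * Nat.multinomial Finset.univ δ := by ring
    rw [e1, h2, Nat.factorial_succ, ← h3]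
    ring
  exact Nat.eq_of_mul_eq_mul_left
    (Finset.prod_pos fun i _ => Nat.factorial_pos (γ i)) key

lemma mean_lemma {r : ℕ} (p : Fin r → ℝ) (m : ℕ) (j : Fin r) :
    ∑ β ∈ Finset.Nat.antidiagonalTuple r (m + 1), multinomialWeight p β * (β j : ℝ) =
      ((m : ℝ) + 1) * p j *
        ∑ γ ∈ Finset.Nat.antidiagonalTuple r m, multinomialWeight p γ := by
  classical
  set e : Fin r → ℕ := Pi.single j 1 with he
  have hej : e j = 1 := by rw [he]; exact Pi.single_eq_same j 1
  have hene : ∀ i, i ≠ j → e i = 0 := fun i hi => by rw [he]; exact Pi.single_eq_of_ne hi 1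
  have hesum : ∑ i, e i = 1 := by rw [he]; simp [Finset.sum_pi_single']
  rw [Finset.mul_sum]
  rw [← Finset.sum_filter_of_ne (p := fun β => β j ≠ 0)
    (by intro β _ h h0; apply h; rw [h0]; simp)]
  refine Finset.sum_nbij' (i := fun β => Function.update β j (β j - 1))
    (j := fun γ => γ + e) ?_ ?_ ?_ ?_ ?_
  · intro β hβ
    simp only [Finset.mem_filter, Finset.Nat.mem_antidiagonalTuple] at hβ ⊢
    obtain ⟨hs, hj⟩ := hβ
    rw [Finset.sum_update_of_mem (Finset.mem_univ j), ← Finset.erase_eq]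
    have h2 : β j + ∑ i ∈ Finset.univ.erase j, β i = m + 1 := by
      rw [Finset.add_sum_erase Finset.univ β (Finset.mem_univ j)]; exact hs
    omega
  · intro γ hγ
    simp only [Finset.Nat.mem_antidiagonalTuple] at hγ
    rw [Finset.mem_filter, Finset.Nat.mem_antidiagonalTuple]
    constructor
    · have hsplit : ∑ i, (γ + e) i = (∑ i, γ i) + ∑ i, e i := by
        rw [← Finset.sum_add_distrib]; rfl
      rw [hsplit, hγ, hesum]
    · show γ j + e j ≠ 0
      rw [hej]
      omega
  · intro β hβ
    simp only [Finset.mem_filter, Finset.Nat.mem_antidiagonalTuple] at hβ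
    funext i
    show Function.update β j (β j - 1) i + e i = β i
    by_cases hij : i = j
    · subst hij
      rw [Function.update_self, hej]
      omega
    · rw [Function.update_of_ne hij, hene i hij]
      omega
  · intro γ hγ
    funext i
    show Function.update (γ + e) j ((γ + e) j - 1) i = γ i
    by_cases hij : i = j
    · subst hij
      rw [Function.update_self]
      show γ i + e i - 1 = γ i
      rw [hej]
      omega
    · rw [Function.update_of_ne hij]
      show γ i + e i = γ i
      rw [hene i hij]
      omega
  · intro β hβ
    simp only [Finset.mem_filter, Finset.Nat.mem_antidiagonalTuple] at hβ
    obtain ⟨hs, hj⟩ := hβ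
    set γ := Function.update β j (β j - 1) with hγdef
    have hγsum : ∑ i, γ i = m := by
      rw [hγdef, Finset.sum_update_of_mem (Finset.mem_univ j), ← Finset.erase_eq]
      have h2 : β j + ∑ i ∈ Finset.univ.erase j, β i = m + 1 := by
        rw [Finset.add_sum_erase Finset.univ β (Finset.mem_univ j)]; exact hs
      omega
    have hβγ : β = γ + e := by
      funext i
      show β i = γ i + e i
      by_cases hij : i = j
      · subst hij
        rw [hγdef, Function.update_self, hej]
        omega
      · rw [hγdef, Function.update_of_ne hij, hene i hij]
        omega
    have hmul := mult_succ γ j m hγsum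
    rw [show γ + Pi.single j 1 = γ + e from rfl, ← hβγ] at hmul
    have hβje : β j = γ j + 1 := by
      rw [hβγ]; show γ j + e j = γ j + 1; rw [hej]
    have hprod : ∏ i, p i ^ β i = p j * ∏ i, p i ^ γ i := by
      rw [← Finset.mul_prod_erase Finset.univ (fun i => p i ^ β i) (Finset.mem_univ j),
        ← Finset.mul_prod_erase Finset.univ (fun i => p i ^ γ i) (Finset.mem_univ j)]
      have heq : ∀ i ∈ Finset.univ.erase j, p i ^ β i = p i ^ γ i := by
        intro i hi
        rw [hβγ]
        show p i ^ (γ i + e i) = p i ^ γ i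
        rw [hene i (Finset.ne_of_mem_erase hi), Nat.add_zero]
      rw [Finset.prod_congr rfl heq, hβje, pow_succ]
      ring
    have hcast : ((γ j : ℝ) + 1) * (Nat.multinomial Finset.univ β : ℝ)
        = ((m : ℝ) + 1) * (Nat.multinomial Finset.univ γ : ℝ) := by
      exact_mod_cast congrArg (fun n : ℕ => (n : ℝ)) hmul
    show multinomialWeight p β * (β j : ℝ) = ((m:ℝ)+1) * p j * multinomialWeight p γ
    unfold multinomialWeight
    rw [hprod, hβje]
    push_cast
    linear_combination (p j * ∏ i, p i ^ γ i) * hcast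


lemma mass_lemma {r : ℕ} (p : Fin r → ℝ) (m : ℕ) :
    ∑ β ∈ Finset.Nat.antidiagonalTuple r m, multinomialWeight p β = (∑ j, p j) ^ m := by
  rw [← Finset.piAntidiag_univ_fin_eq_antidiagonalTuple, Finset.sum_pow_eq_sum_piAntidiag]
  rfl

lemma multinomialWeight_nonneg {r : ℕ} {p : Fin r → ℝ} (hp : ∀ j, 0 ≤ p j) (β : Fin r → ℕ) :
    0 ≤ multinomialWeight p β :=
  mul_nonneg (Nat.cast_nonneg _) (Finset.prod_nonneg fun j _ => pow_nonneg (hp j) _)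

lemma mean_eval {r : ℕ} (p : Fin r → ℝ) (hp : ∑ j, p j = 1) (m : ℕ) (j : Fin r) :
    ∑ β ∈ Finset.Nat.antidiagonalTuple r m, multinomialWeight p β * (β j : ℝ)
      = (m : ℝ) * p j := by
  cases m with
  | zero =>
      rw [Finset.Nat.antidiagonalTuple_zero_right]
      simp
  | succ m =>
      rw [mean_lemma, mass_lemma, hp, one_pow, mul_one]
      push_cast
      ring

lemma exp_coord {r : ℕ} (P : Matrix (Fin r) (Fin r) ℝ) (hP : IsStochastic P)
    (n : Fin r → ℕ) (i₀ j : Fin r) :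
    ∑ ξ ∈ Fintype.piFinset (fun i => Finset.Nat.antidiagonalTuple r (n i)),
      (∏ i, multinomialWeight (P i) (ξ i)) * (ξ i₀ j : ℝ) = (n i₀ : ℝ) * P i₀ j := by
  classical
  have hrow : ∀ i, ∑ β ∈ Finset.Nat.antidiagonalTuple r (n i), multinomialWeight (P i) β = 1 := by
    intro i
    rw [mass_lemma, hP.2 i, one_pow]
  set g : Fin r → (Fin r → ℕ) → ℝ :=
    fun i β => if i = i₀ then multinomialWeight (P i) β * (β j : ℝ)
      else multinomialWeight (P i) β with hg
  have hpt : ∀ ξ : Fin r → (Fin r → ℕ),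
      (∏ i, multinomialWeight (P i) (ξ i)) * (ξ i₀ j : ℝ) = ∏ i, g i (ξ i) := by
    intro ξ
    rw [← Finset.mul_prod_erase Finset.univ (fun i => multinomialWeight (P i) (ξ i))
        (Finset.mem_univ i₀),
      ← Finset.mul_prod_erase Finset.univ (fun i => g i (ξ i)) (Finset.mem_univ i₀)]
    have he : ∀ i ∈ Finset.univ.erase i₀, g i (ξ i) = multinomialWeight (P i) (ξ i) := by
      intro i hi
      rw [hg]
      simp only [if_neg (Finset.ne_of_mem_erase hi)]
    rw [Finset.prod_congr rfl he, hg]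
    simp only [if_pos rfl, if_true, eq_self_iff_true]
    ring
  calc ∑ ξ ∈ Fintype.piFinset (fun i => Finset.Nat.antidiagonalTuple r (n i)),
        (∏ i, multinomialWeight (P i) (ξ i)) * (ξ i₀ j : ℝ)
      = ∑ ξ ∈ Fintype.piFinset (fun i => Finset.Nat.antidiagonalTuple r (n i)),
        ∏ i, g i (ξ i) := Finset.sum_congr rfl fun ξ _ => hpt ξ
    _ = ∏ i, ∑ β ∈ Finset.Nat.antidiagonalTuple r (n i), g i β :=
        (Finset.prod_univ_sum _ _).symm
    _ = (n i₀ : ℝ) * P i₀ j := by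
        rw [Finset.prod_eq_single i₀]
        · rw [hg]
          simp only [if_pos rfl]
          exact mean_eval (P i₀) (hP.2 i₀) (n i₀) j
        · intro i _ hi
          have : ∀ β, g i β = multinomialWeight (P i) β := fun β => by
            rw [hg]; simp only [if_neg hi]
          rw [Finset.sum_congr rfl fun β _ => this β, hrow i]
        · intro h
          exact absurd (Finset.mem_univ i₀) h

lemma exp_total {r : ℕ} (P : Matrix (Fin r) (Fin r) ℝ) (hP : IsStochastic P)
    (n : Fin r → ℕ) :
    ∑ ξ ∈ Fintype.piFinset (fun i => Finset.Nat.antidiagonalTuple r (n i)),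
      (∏ i, multinomialWeight (P i) (ξ i)) = 1 := by
  rw [← Finset.prod_univ_sum]
  refine Finset.prod_eq_one fun i _ => ?_
  rw [mass_lemma, hP.2 i, one_pow]


lemma core_bound {r : ℕ} (f : (Fin r → ℝ) → ℝ) (N : ℕ) (hN : 1 ≤ N)
    (P : Matrix (Fin r) (Fin r) ℝ) (hP : IsStochastic P)
    (c : ℝ) (hc : 0 ≤ c) (hPoff : ∀ i j, i ≠ j → P i j ≤ c)
    (L : ℝ) (hL : 0 ≤ L)
    (hLip : ∀ x y : Fin r → ℝ, (∀ i, 0 ≤ x i) → (∀ i, x i ≤ 1) → (∀ i, 0 ≤ y i) →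
      (∀ i, y i ≤ 1) → |f x - f y| ≤ L * ∑ j, |x j - y j|)
    (n : Fin r → ℕ) (hn : ∑ i, n i = N) :
    |SOp N P f n - f (fun i => (n i : ℝ) / N)| ≤ 2 * L * r * c := by
  classical
  have hNpos : (0 : ℝ) < N := by exact_mod_cast hN
  set Ξ := Fintype.piFinset fun i => Finset.Nat.antidiagonalTuple r (n i) with hΞ
  set w : (Fin r → Fin r → ℕ) → ℝ := fun ξ => ∏ i, multinomialWeight (P i) (ξ i) with hw
  have hw0 : ∀ ξ, 0 ≤ w ξ := fun ξ =>
    Finset.prod_nonneg fun i _ => multinomialWeight_nonneg (fun j => hP.1 i j) (ξ i)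
  have hw1 : ∑ ξ ∈ Ξ, w ξ = 1 := exp_total P hP n
  set p : Fin r → ℝ := fun i => (n i : ℝ) / N with hp
  set X : (Fin r → Fin r → ℕ) → (Fin r → ℝ) := fun ξ j => ((∑ i, ξ i j : ℕ) : ℝ) / N with hX
  set D : (Fin r → Fin r → ℕ) → ℝ :=
    fun ξ => ∑ i, ∑ j ∈ Finset.univ.erase i, (ξ i j : ℝ) with hD
  -- pointwise estimates for ξ ∈ Ξ
  have hrowsum : ∀ ξ ∈ Ξ, ∀ i, ∑ j, ξ i j = n i := by
    intro ξ hξ i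
    rw [hΞ, Fintype.mem_piFinset] at hξ
    have := hξ i
    rwa [Finset.Nat.mem_antidiagonalTuple] at this
  have hptwise : ∀ ξ ∈ Ξ, |f (X ξ) - f p| ≤ L * (2 / N) * D ξ := by
    intro ξ hξ
    have hrs := hrowsum ξ hξ
    have hXtot : ∑ j, ∑ i, ξ i j = N := by
      rw [Finset.sum_comm]
      rw [Finset.sum_congr rfl fun i _ => hrs i, hn]
    have hX0 : ∀ j, 0 ≤ X ξ j := fun j => by positivity
    have hX1 : ∀ j, X ξ j ≤ 1 := by
      intro j
      rw [hX]
      rw [div_le_one hNpos]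
      have : (∑ i, ξ i j) ≤ N := by
        rw [← hXtot]
        exact Finset.single_le_sum (f := fun j => ∑ i, ξ i j) (fun _ _ => Nat.zero_le _)
          (Finset.mem_univ j)
      exact_mod_cast this
    have hp0 : ∀ i, 0 ≤ p i := fun i => by positivity
    have hp1 : ∀ i, p i ≤ 1 := by
      intro i
      rw [hp, div_le_one hNpos]
      have : n i ≤ N := by
        rw [← hn]
        exact Finset.single_le_sum (fun _ _ => Nat.zero_le _) (Finset.mem_univ i)
      exact_mod_cast this
    refine le_trans (hLip (X ξ) p hX0 hX1 hp0 hp1) ?_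
    have hsum : ∑ j, |X ξ j - p j| ≤ (2 / N) * D ξ := by
      have hterm : ∀ j, |X ξ j - p j| ≤
          (1 / N) * ((∑ i ∈ Finset.univ.erase j, (ξ i j : ℝ))
            + ∑ j' ∈ Finset.univ.erase j, (ξ j j' : ℝ)) := by
        intro j
        have hcol : (((∑ i, ξ i j : ℕ) : ℝ)) = (ξ j j : ℝ) + ∑ i ∈ Finset.univ.erase j, (ξ i j : ℝ) := by
          push_cast
          rw [Finset.add_sum_erase Finset.univ (fun i => (ξ i j : ℝ)) (Finset.mem_univ j)]
        have hrow : ((n j : ℕ) : ℝ) = (ξ j j : ℝ) + ∑ j' ∈ Finset.univ.erase j, (ξ j j' : ℝ) := by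
          rw [← hrs j]
          push_cast
          rw [Finset.add_sum_erase Finset.univ (fun j' => (ξ j j' : ℝ)) (Finset.mem_univ j)]
        have : X ξ j - p j = (((∑ i ∈ Finset.univ.erase j, (ξ i j : ℝ)))
            - ∑ j' ∈ Finset.univ.erase j, (ξ j j' : ℝ)) / N := by
          rw [hX, hp]
          rw [div_sub_div_same]
          congr 1
          rw [hcol, hrow]
          ring
        rw [this, abs_div, abs_of_pos hNpos]
        rw [div_le_iff₀ hNpos]
        have habs : |(∑ i ∈ Finset.univ.erase j, (ξ i j : ℝ))
            - ∑ j' ∈ Finset.univ.erase j, (ξ j j' : ℝ)| ≤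
            (∑ i ∈ Finset.univ.erase j, (ξ i j : ℝ))
            + ∑ j' ∈ Finset.univ.erase j, (ξ j j' : ℝ) := by
          have h1 := abs_sub (∑ i ∈ Finset.univ.erase j, (ξ i j : ℝ))
            (∑ j' ∈ Finset.univ.erase j, (ξ j j' : ℝ))
          have hA : (0:ℝ) ≤ ∑ i ∈ Finset.univ.erase j, (ξ i j : ℝ) :=
            Finset.sum_nonneg fun _ _ => Nat.cast_nonneg _
          have hB : (0:ℝ) ≤ ∑ j' ∈ Finset.univ.erase j, (ξ j j' : ℝ) :=
            Finset.sum_nonneg fun _ _ => Nat.cast_nonneg _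
          rwa [abs_of_nonneg hA, abs_of_nonneg hB] at h1
        refine le_trans habs (le_of_eq ?_)
        field_simp
      refine le_trans (Finset.sum_le_sum fun j _ => hterm j) ?_
      rw [← Finset.mul_sum]
      have hswap : ∑ j, ∑ i ∈ Finset.univ.erase j, (ξ i j : ℝ) = D ξ := by
        have h1 : ∀ j, ∑ i ∈ Finset.univ.erase j, (ξ i j : ℝ)
            = (∑ i, (ξ i j : ℝ)) - (ξ j j : ℝ) :=
          fun j => Finset.sum_erase_eq_sub (Finset.mem_univ j)
        have h2 : ∀ i, ∑ j ∈ Finset.univ.erase i, (ξ i j : ℝ)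
            = (∑ j, (ξ i j : ℝ)) - (ξ i i : ℝ) :=
          fun i => Finset.sum_erase_eq_sub (Finset.mem_univ i)
        calc ∑ j, ∑ i ∈ Finset.univ.erase j, (ξ i j : ℝ)
            = ∑ j, ((∑ i, (ξ i j : ℝ)) - (ξ j j : ℝ)) := Finset.sum_congr rfl fun j _ => h1 j
          _ = (∑ j, ∑ i, (ξ i j : ℝ)) - ∑ j, (ξ j j : ℝ) := Finset.sum_sub_distrib _ _
          _ = (∑ i, ∑ j, (ξ i j : ℝ)) - ∑ i, (ξ i i : ℝ) := by rw [Finset.sum_comm]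
          _ = ∑ i, ((∑ j, (ξ i j : ℝ)) - (ξ i i : ℝ)) := (Finset.sum_sub_distrib _ _).symm
          _ = D ξ := (Finset.sum_congr rfl fun i _ => (h2 i).symm)
      have hsplit : ∑ j, ((∑ i ∈ Finset.univ.erase j, (ξ i j : ℝ))
          + ∑ j' ∈ Finset.univ.erase j, (ξ j j' : ℝ)) = 2 * D ξ := by
        rw [Finset.sum_add_distrib, hswap, hD]
        ring
      rw [hsplit]
      apply le_of_eq
      ring
    calc L * ∑ j, |X ξ j - p j| ≤ L * ((2 / N) * D ξ) := mul_le_mul_of_nonneg_left hsum hL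
      _ = L * (2 / N) * D ξ := by ring
  -- assemble
  have hS : SOp N P f n = ∑ ξ ∈ Ξ, w ξ * f (X ξ) := rfl
  have hfp : f (fun i => (n i : ℝ) / N) = f p := rfl
  have hdiff : SOp N P f n - f p = ∑ ξ ∈ Ξ, w ξ * (f (X ξ) - f p) := by
    rw [hS]
    rw [show (∑ ξ ∈ Ξ, w ξ * (f (X ξ) - f p))
        = (∑ ξ ∈ Ξ, w ξ * f (X ξ)) - ∑ ξ ∈ Ξ, w ξ * f p by
      rw [← Finset.sum_sub_distrib]
      exact Finset.sum_congr rfl fun ξ _ => by ring]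
    rw [← Finset.sum_mul, hw1, one_mul]
  have hED : ∑ ξ ∈ Ξ, w ξ * D ξ = ∑ i, ∑ j ∈ Finset.univ.erase i, (n i : ℝ) * P i j := by
    have h1 : ∀ ξ, w ξ * D ξ = ∑ i, ∑ j ∈ Finset.univ.erase i, w ξ * (ξ i j : ℝ) := by
      intro ξ
      rw [hD, Finset.mul_sum]
      exact Finset.sum_congr rfl fun i _ => Finset.mul_sum _ _ _
    rw [Finset.sum_congr rfl fun ξ _ => h1 ξ, Finset.sum_comm]
    refine Finset.sum_congr rfl fun i _ => ?_
    rw [Finset.sum_comm]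
    refine Finset.sum_congr rfl fun j _ => ?_
    exact exp_coord P hP n i j
  have hEDle : ∑ ξ ∈ Ξ, w ξ * D ξ ≤ (N : ℝ) * (r * c) := by
    rw [hED]
    have hrow : ∀ i, ∑ j ∈ Finset.univ.erase i, (n i : ℝ) * P i j ≤ (n i : ℝ) * (r * c) := by
      intro i
      rw [← Finset.mul_sum]
      refine mul_le_mul_of_nonneg_left ?_ (Nat.cast_nonneg _)
      have h2 : ∑ j ∈ Finset.univ.erase i, P i j ≤ ∑ _j ∈ Finset.univ.erase i, c :=
        Finset.sum_le_sum fun j hj => hPoff i j (Ne.symm (Finset.ne_of_mem_erase hj))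
      refine le_trans h2 ?_
      rw [Finset.sum_const, nsmul_eq_mul]
      refine mul_le_mul_of_nonneg_right ?_ hc
      have : (Finset.univ.erase i).card ≤ r := by
        refine le_trans (Finset.card_le_card (Finset.erase_subset _ _)) ?_
        simp
      exact_mod_cast this
    refine le_trans (Finset.sum_le_sum fun i _ => hrow i) ?_
    rw [← Finset.sum_mul]
    have : (∑ i, (n i : ℝ)) = (N : ℝ) := by exact_mod_cast congrArg (fun k : ℕ => (k : ℝ)) hn
    rw [this]
  rw [hfp, hdiff]
  calc |∑ ξ ∈ Ξ, w ξ * (f (X ξ) - f p)| ≤ ∑ ξ ∈ Ξ, |w ξ * (f (X ξ) - f p)| :=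
        Finset.abs_sum_le_sum_abs _ _
    _ = ∑ ξ ∈ Ξ, w ξ * |f (X ξ) - f p| := by
        refine Finset.sum_congr rfl fun ξ _ => ?_
        rw [abs_mul, abs_of_nonneg (hw0 ξ)]
    _ ≤ ∑ ξ ∈ Ξ, w ξ * (L * (2 / N) * D ξ) :=
        Finset.sum_le_sum fun ξ hξ =>
          mul_le_mul_of_nonneg_left (hptwise ξ hξ) (hw0 ξ)
    _ = L * (2 / N) * ∑ ξ ∈ Ξ, w ξ * D ξ := by
        rw [Finset.mul_sum]
        exact Finset.sum_congr rfl fun ξ _ => by ring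
    _ ≤ L * (2 / N) * ((N : ℝ) * (r * c)) := by
        refine mul_le_mul_of_nonneg_left hEDle ?_
        positivity
    _ = 2 * L * r * c := by
        field_simp

lemma lip_of_contDiff {r : ℕ} (f : (Fin r → ℝ) → ℝ) (hf : ContDiff ℝ 2 f) :
    ∃ L : ℝ, 0 ≤ L ∧ ∀ x y : Fin r → ℝ, (∀ i, 0 ≤ x i) → (∀ i, x i ≤ 1) →
      (∀ i, 0 ≤ y i) → (∀ i, y i ≤ 1) → |f x - f y| ≤ L * ∑ j, |x j - y j| := by
  set K := Metric.closedBall (0 : Fin r → ℝ) 1 with hK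
  have hKc : IsCompact K := isCompact_closedBall _ _
  have hKconv : Convex ℝ K := convex_closedBall _ _
  have hcont : ContinuousOn (fderiv ℝ f) K :=
    (hf.continuous_fderiv (by norm_num)).continuousOn
  obtain ⟨L0, hL0⟩ := hKc.exists_bound_of_continuousOn hcont
  set L := max L0 0 with hLdef
  have hL : 0 ≤ L := le_max_right _ _
  have hLb : ∀ x ∈ K, ‖fderiv ℝ f x‖ ≤ L := fun x hx => le_trans (hL0 x hx) (le_max_left _ _)
  refine ⟨L, hL, ?_⟩
  intro x y hx0 hx1 hy0 hy1
  have hmem : ∀ z : Fin r → ℝ, (∀ i, 0 ≤ z i) → (∀ i, z i ≤ 1) → z ∈ K := by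
    intro z hz0 hz1
    rw [hK, mem_closedBall_zero_iff]
    rw [pi_norm_le_iff_of_nonneg (by norm_num : (0:ℝ) ≤ 1)]
    intro i
    rw [Real.norm_eq_abs, abs_le]
    exact ⟨le_trans (by norm_num) (hz0 i), hz1 i⟩
  have hxK := hmem x hx0 hx1
  have hyK := hmem y hy0 hy1
  have hlip : ‖f x - f y‖ ≤ L * ‖x - y‖ :=
    Convex.norm_image_sub_le_of_norm_fderiv_le
      (fun z hz => (hf.differentiable (by norm_num)).differentiableAt)
      hLb hKconv hyK hxK
  have hnorm : ‖x - y‖ ≤ ∑ j, |x j - y j| := by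
    rw [pi_norm_le_iff_of_nonneg (Finset.sum_nonneg fun j _ => abs_nonneg _)]
    intro i
    rw [show (x - y) i = x i - y i from rfl, Real.norm_eq_abs]
    exact Finset.single_le_sum (f := fun j => |x j - y j|) (fun j _ => abs_nonneg _)
      (Finset.mem_univ i)
  calc |f x - f y| = ‖f x - f y‖ := (Real.norm_eq_abs _).symm
    _ ≤ L * ‖x - y‖ := hlip
    _ ≤ L * ∑ j, |x j - y j| := mul_le_mul_of_nonneg_left hnorm hL



lemma frobNorm_nonneg {r : ℕ} (M : Matrix (Fin r) (Fin r) ℝ) : 0 ≤ frobNorm M :=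
  Real.sqrt_nonneg _

lemma entry_le_frobNorm {r : ℕ} (M : Matrix (Fin r) (Fin r) ℝ) (i j : Fin r) :
    |M i j| ≤ frobNorm M := by
  rw [← Real.sqrt_sq_eq_abs]
  refine Real.sqrt_le_sqrt ?_
  calc (M i j) ^ 2 ≤ ∑ j', (M i j') ^ 2 :=
      Finset.single_le_sum (f := fun j' => (M i j') ^ 2) (fun _ _ => sq_nonneg _)
        (Finset.mem_univ j)
    _ ≤ ∑ i', ∑ j', (M i' j') ^ 2 :=
      Finset.single_le_sum (f := fun i' => ∑ j', (M i' j') ^ 2)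
        (fun _ _ => Finset.sum_nonneg fun _ _ => sq_nonneg _) (Finset.mem_univ i)

lemma min_frob_le_exp_mul_dU {r : ℕ} (x y : ℝ → Matrix (Fin r) (Fin r) ℝ)
    (T : ℝ) (hT : 0 < T) (s : ℝ) (hs : s ∈ Set.Icc 0 T) :
    min (frobNorm (x s - y s)) 1 ≤ Real.exp (T + 1) * dU x y := by
  set v : ℝ → ℝ := fun t => min (frobNorm (x t - y t)) 1 with hv
  have hv0 : ∀ t, 0 ≤ v t := fun t => le_min (frobNorm_nonneg _) zero_le_one
  have hv1 : ∀ t, v t ≤ 1 := fun t => min_le_right _ _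
  set g : ℝ → ℝ := fun u => sSup (v '' Set.Icc 0 u) with hg
  have hbdd : ∀ u, BddAbove (v '' Set.Icc 0 u) := by
    intro u
    exact ⟨1, fun z hz => by obtain ⟨t, _, rfl⟩ := hz; exact hv1 t⟩
  have hgneg : ∀ u : ℝ, u < 0 → g u = 0 := by
    intro u hu
    rw [hg]
    simp only []
    rw [Set.Icc_eq_empty (by linarith), Set.image_empty, Real.sSup_empty]
  have hg0 : ∀ u : ℝ, 0 ≤ u → 0 ≤ g u := by
    intro u hu
    refine le_trans (hv0 0) (le_csSup (hbdd u) ?_)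
    exact Set.mem_image_of_mem v (Set.mem_Icc.mpr ⟨le_refl 0, hu⟩)
  have hmono : Monotone g := by
    intro u u' huu'
    rcases lt_or_ge u 0 with hu | hu
    · rw [hgneg u hu]
      rcases lt_or_ge u' 0 with hu' | hu'
      · rw [hgneg u' hu']
      · exact hg0 u' hu'
    · exact csSup_le_csSup (hbdd u') (Set.Nonempty.image v
        (Set.nonempty_Icc.mpr hu)) (Set.image_mono (Set.Icc_subset_Icc_right huu'))
  have hgle1 : ∀ u, g u ≤ 1 := by
    intro u
    rcases lt_or_ge u 0 with hu | hu
    · rw [hgneg u hu]; norm_num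
    · exact csSup_le (Set.Nonempty.image v (Set.nonempty_Icc.mpr hu))
        (fun z hz => by obtain ⟨t, _, rfl⟩ := hz; exact hv1 t)
  have hmeas : Measurable g := hmono.measurable
  have hintmaj : MeasureTheory.IntegrableOn (fun u => Real.exp (-u)) (Set.Ioi (0:ℝ)) := by
    have := exp_neg_integrableOn_Ioi 0 (one_pos)
    simpa using this
  have hgnn : ∀ u, 0 ≤ g u := by
    intro u
    rcases lt_or_ge u 0 with hu | hu
    · rw [hgneg u hu]
    · exact hg0 u hu
  have hint : MeasureTheory.IntegrableOn (fun u => Real.exp (-u) * g u) (Set.Ioi (0:ℝ)) := by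
    refine MeasureTheory.Integrable.mono hintmaj ?_ ?_
    · exact ((Real.measurable_exp.comp measurable_neg).mul hmeas).aestronglyMeasurable
    · refine Filter.Eventually.of_forall fun u => ?_
      show ‖Real.exp (-u) * g u‖ ≤ ‖Real.exp (-u)‖
      rw [Real.norm_eq_abs, Real.norm_eq_abs, abs_mul, abs_of_pos (Real.exp_pos _),
        abs_of_nonneg (hgnn u)]
      calc Real.exp (-u) * g u ≤ Real.exp (-u) * 1 :=
            mul_le_mul_of_nonneg_left (hgle1 u) (le_of_lt (Real.exp_pos _))
        _ = Real.exp (-u) := mul_one _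
  have hsub : Set.Ioi (T + 1) ⊆ Set.Ioi (0:ℝ) := fun z hz => by
    simp only [Set.mem_Ioi] at hz ⊢; linarith
  have step1 : ∫ u in Set.Ioi (T + 1), Real.exp (-u) * g u ≤ dU x y := by
    refine MeasureTheory.setIntegral_mono_set hint
      (Filter.Eventually.of_forall fun u =>
        mul_nonneg (le_of_lt (Real.exp_pos _)) (hgnn u))
      (HasSubset.Subset.eventuallyLE hsub)
  have hint2 : MeasureTheory.IntegrableOn (fun u => Real.exp (-u) * g u)
      (Set.Ioi (T + 1)) := hint.mono_set hsub
  have hint3 : MeasureTheory.IntegrableOn (fun u => Real.exp (-u) * g T)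
      (Set.Ioi (T + 1)) := by
    refine MeasureTheory.Integrable.mul_const ?_ _
    have := exp_neg_integrableOn_Ioi (T+1) (one_pos)
    simp at this; exact this
  have step2 : ∫ u in Set.Ioi (T + 1), Real.exp (-u) * g T
      ≤ ∫ u in Set.Ioi (T + 1), Real.exp (-u) * g u := by
    refine MeasureTheory.setIntegral_mono_on hint3 hint2 measurableSet_Ioi ?_
    intro u hu
    rw [Set.mem_Ioi] at hu
    exact mul_le_mul_of_nonneg_left (hmono (by linarith)) (le_of_lt (Real.exp_pos _))
  have step3 : ∫ u in Set.Ioi (T + 1), Real.exp (-u) * g T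
      = Real.exp (-(T + 1)) * g T := by
    rw [MeasureTheory.integral_mul_const, integral_exp_neg_Ioi]
  have key : Real.exp (-(T + 1)) * g T ≤ dU x y := by
    rw [← step3]
    exact le_trans step2 step1
  have hsle : v s ≤ g T := le_csSup (hbdd T) (Set.mem_image_of_mem v hs)
  have : g T ≤ Real.exp (T + 1) * dU x y := by
    have h2 := mul_le_mul_of_nonneg_left key (le_of_lt (Real.exp_pos (T + 1)))
    rw [← mul_assoc, ← Real.exp_add,
      show T + 1 + -(T + 1) = 0 by ring, Real.exp_zero, one_mul] at h2
    exact h2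
  exact le_trans hsle this

lemma tendsto_matrix_abs_bound {r : ℕ} (Alim : ℝ → Matrix (Fin r) (Fin r) ℝ)
    (L : Matrix (Fin r) (Fin r) ℝ) (l : Filter ℝ)
    (h : Filter.Tendsto Alim l (nhds L)) :
    ∃ M, ∀ᶠ y in l, ∀ i j, |Alim y i j| ≤ M := by
  refine ⟨(∑ i, ∑ j, |L i j|) + 1, ?_⟩
  rw [Filter.eventually_all]
  intro i
  rw [Filter.eventually_all]
  intro j
  have hLij : |L i j| ≤ ∑ i', ∑ j', |L i' j'| := by
    calc |L i j| ≤ ∑ j', |L i j'| :=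
        Finset.single_le_sum (f := fun j' => |L i j'|) (fun _ _ => abs_nonneg _)
          (Finset.mem_univ j)
      _ ≤ ∑ i', ∑ j', |L i' j'| :=
        Finset.single_le_sum (f := fun i' => ∑ j', |L i' j'|)
          (fun _ _ => Finset.sum_nonneg fun _ _ => abs_nonneg _) (Finset.mem_univ i)
  have hentry : Filter.Tendsto (fun y => Alim y i j) l (nhds (L i j)) := by
    have hc : Continuous (fun m : Matrix (Fin r) (Fin r) ℝ => m i j) :=
      (continuous_apply j).comp (continuous_apply i)
    exact (hc.tendsto L).comp h
  have hev := (Metric.tendsto_nhds.mp hentry) 1 one_pos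
  refine hev.mono fun y hy => ?_
  rw [Real.dist_eq] at hy
  have := abs_sub_abs_le_abs_sub (Alim y i j) (L i j)
  linarith [hLij]

lemma cadlag_bounded {r : ℕ} (Alim : ℝ → Matrix (Fin r) (Fin r) ℝ) (T : ℝ) (hT : 0 < T)
    (hright : ∀ t : ℝ, 0 ≤ t → ContinuousWithinAt Alim (Set.Ici t) t)
    (hleft : ∀ t : ℝ, 0 < t → ∃ L, Filter.Tendsto Alim (nhdsWithin t (Set.Iio t)) (nhds L)) :
    ∃ M : ℝ, ∀ s ∈ Set.Icc (0:ℝ) T, ∀ i j, |Alim s i j| ≤ M := by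
  classical
  have claim : ∀ t : ℝ, ∃ (U : Set ℝ) (M : ℝ), t ∈ Set.Icc (0:ℝ) T →
      (IsOpen U ∧ t ∈ U ∧ ∀ y ∈ U, y ∈ Set.Icc (0:ℝ) T → ∀ i j, |Alim y i j| ≤ M) := by
    intro t
    by_cases ht : t ∈ Set.Icc (0:ℝ) T
    · obtain ⟨ht0, htT⟩ := ht
      -- right side
      obtain ⟨M1, hM1⟩ := tendsto_matrix_abs_bound Alim (Alim t) _ (hright t ht0)
      -- left side
      have hLeft : ∃ M2, ∀ᶠ y in nhdsWithin t (Set.Iio t),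
          y ∈ Set.Icc (0:ℝ) T → ∀ i j, |Alim y i j| ≤ M2 := by
        rcases lt_or_ge 0 t with htpos | htneg
        · obtain ⟨Lm, hLm⟩ := hleft t htpos
          obtain ⟨M2, hM2⟩ := tendsto_matrix_abs_bound Alim Lm _ hLm
          exact ⟨M2, hM2.mono fun y hy _ => hy⟩
        · refine ⟨0, ?_⟩
          have h0 : t ≤ 0 := htneg
          refine eventually_mem_nhdsWithin.mono fun y hy hyIcc => ?_
          rw [Set.mem_Iio] at hy
          exact absurd hyIcc (by
            rw [Set.mem_Icc]
            push_neg
            intro h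
            linarith)
      obtain ⟨M2, hM2⟩ := hLeft
      set M := max M1 M2 with hM
      have hev : ∀ᶠ y in nhds t, y ∈ Set.Icc (0:ℝ) T → ∀ i j, |Alim y i j| ≤ M := by
        rw [← nhdsLT_sup_nhdsGE t, Filter.eventually_sup]
        constructor
        · exact hM2.mono fun y hy hyIcc i j =>
            le_trans (hy hyIcc i j) (le_max_right _ _)
        · exact (hM1.mono fun y hy _ i j =>
            le_trans (hy i j) (le_max_left _ _))
      obtain ⟨U, hUsub, hUopen, htU⟩ := eventually_nhds_iff.mp hev
      exact ⟨U, M, fun _ => ⟨hUopen, htU, fun y hyU hyIcc => hUsub y hyU hyIcc⟩⟩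
    · exact ⟨Set.univ, 0, fun h => absurd h ht⟩
  choose U M hUM using claim
  obtain ⟨fs, hfs_sub, hfs_cover⟩ :=
    (isCompact_Icc (a := (0:ℝ)) (b := T)).elim_nhds_subcover U
      (fun t ht => ((hUM t ht).1).mem_nhds ((hUM t ht).2.1))
  refine ⟨∑ x ∈ fs, max (M x) 0, ?_⟩
  intro s hs i j
  obtain ⟨x, hxfs, hxU⟩ := Set.mem_iUnion₂.mp (hfs_cover hs)
  have hx := hUM x (hfs_sub x hxfs)
  calc |Alim s i j| ≤ M x := hx.2.2 s hxU hs i j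
    _ ≤ max (M x) 0 := le_max_left _ _
    _ ≤ ∑ x ∈ fs, max (M x) 0 :=
      Finset.single_le_sum (f := fun x => max (M x) 0)
        (fun _ _ => le_max_right _ _) hxfs

lemma entries_le_of_stochastic {r : ℕ} (B : Matrix (Fin r) (Fin r) ℝ) (N : ℕ) (hN : 1 ≤ N)
    (hst : IsStochastic (1 + ((N : ℝ))⁻¹ • B)) : ∀ i j, |B i j| ≤ N := by
  intro i j
  have hNpos : (0:ℝ) < N := by exact_mod_cast hN
  set P := 1 + ((N : ℝ))⁻¹ • B with hPdef
  have hPapply : ∀ a b, P a b = (if a = b then (1:ℝ) else 0) + (N:ℝ)⁻¹ * B a b := by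
    intro a b
    rw [hPdef]
    rw [Matrix.add_apply, Matrix.smul_apply, Matrix.one_apply]
    simp [smul_eq_mul]
  have hPle1 : ∀ a b, P a b ≤ 1 := by
    intro a b
    calc P a b ≤ ∑ b', P a b' :=
        Finset.single_le_sum (fun b' _ => hst.1 a b') (Finset.mem_univ b)
      _ = 1 := hst.2 a
  have h0 := hst.1 i j
  have h1 := hPle1 i j
  rw [hPapply i j] at h0 h1
  have hBc : B i j = (N:ℝ) * ((N:ℝ)⁻¹ * B i j) := by
    rw [← mul_assoc, mul_inv_cancel₀ (ne_of_gt hNpos), one_mul]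
  by_cases hij : i = j
  · rw [if_pos hij] at h0 h1
    have hc1 : -1 ≤ (N:ℝ)⁻¹ * B i j := by linarith
    have hc2 : (N:ℝ)⁻¹ * B i j ≤ 0 := by linarith
    rw [abs_le]
    constructor
    · rw [hBc]
      have := mul_le_mul_of_nonneg_left hc1 (le_of_lt hNpos)
      linarith
    · rw [hBc]
      have := mul_le_mul_of_nonneg_left hc2 (le_of_lt hNpos)
      linarith
  · rw [if_neg hij] at h0 h1
    have hc1 : 0 ≤ (N:ℝ)⁻¹ * B i j := by linarith
    have hc2 : (N:ℝ)⁻¹ * B i j ≤ 1 := by linarith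
    rw [abs_le]
    constructor
    · rw [hBc]
      have := mul_le_mul_of_nonneg_left hc1 (le_of_lt hNpos)
      linarith
    · rw [hBc]
      have := mul_le_mul_of_nonneg_left hc2 (le_of_lt hNpos)
      linarith

lemma master_entry_bound {r : ℕ}
    (A : ℕ → ℝ → Matrix (Fin r) (Fin r) ℝ) (Alim : ℝ → Matrix (Fin r) (Fin r) ℝ)
    (hcadlag_right : ∀ t : ℝ, 0 ≤ t → ContinuousWithinAt Alim (Set.Ici t) t)
    (hcadlag_left : ∀ t : ℝ, 0 < t →
      ∃ L, Filter.Tendsto Alim (nhdsWithin t (Set.Iio t)) (nhds L))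
    (hstoch : ∀ N : ℕ, 1 ≤ N → ∀ k : ℕ,
      IsStochastic (1 + ((N : ℝ))⁻¹ • A N ((k : ℝ) / N)))
    (hconv : Filter.Tendsto (fun N => dU (A N) Alim) Filter.atTop (nhds 0))
    (T : ℝ) (hT : 0 < T) :
    ∃ CA : ℝ, 0 ≤ CA ∧ ∀ N : ℕ, 1 ≤ N → ∀ k : ℕ, (k : ℝ) / N ≤ T →
      ∀ i j, |A N ((k : ℝ) / N) i j| ≤ CA := by
  obtain ⟨M, hM⟩ := cadlag_bounded Alim T hT hcadlag_right hcadlag_left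
  have hhalf : (0:ℝ) < Real.exp (-(T+1)) / 2 := by positivity
  have hev := (Metric.tendsto_nhds.mp hconv) (Real.exp (-(T+1)) / 2) hhalf
  obtain ⟨N₀, hN₀⟩ := Filter.eventually_atTop.mp hev
  refine ⟨max (max (M + 1) (N₀ : ℝ)) 0, le_max_right _ _, ?_⟩
  intro N hN k hkT i j
  have hNpos : (0:ℝ) < N := by exact_mod_cast hN
  have hk0 : (0:ℝ) ≤ (k : ℝ) / N := by positivity
  rcases le_or_gt N₀ N with hcase | hcase
  · -- large N: use dU
    have hdU := hN₀ N hcase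
    rw [Real.dist_eq, sub_zero] at hdU
    have hmin := min_frob_le_exp_mul_dU (A N) Alim T hT ((k:ℝ)/N) ⟨hk0, hkT⟩
    have h2 : Real.exp (T+1) * dU (A N) Alim < 1/2 := by
      have h3 : Real.exp (T+1) * dU (A N) Alim ≤ Real.exp (T+1) * |dU (A N) Alim| :=
        mul_le_mul_of_nonneg_left (le_abs_self _) (le_of_lt (Real.exp_pos _))
      have h4 : Real.exp (T+1) * |dU (A N) Alim| < Real.exp (T+1) * (Real.exp (-(T+1)) / 2) :=
        (mul_lt_mul_iff_right₀ (Real.exp_pos _)).mpr hdU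
      have h5 : Real.exp (T+1) * (Real.exp (-(T+1)) / 2) = 1/2 := by
        rw [show Real.exp (T+1) * (Real.exp (-(T+1)) / 2) =
          (Real.exp (T+1) * Real.exp (-(T+1))) / 2 by ring, ← Real.exp_add,
          show T + 1 + -(T+1) = 0 by ring, Real.exp_zero]
      linarith
    have hminlt : min (frobNorm (A N ((k:ℝ)/N) - Alim ((k:ℝ)/N))) 1 < 1/2 :=
      lt_of_le_of_lt hmin h2
    have hfr : frobNorm (A N ((k:ℝ)/N) - Alim ((k:ℝ)/N)) ≤ 1/2 := by
      rcases le_total (frobNorm (A N ((k:ℝ)/N) - Alim ((k:ℝ)/N))) 1 with h | h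
      · rw [min_eq_left h] at hminlt
        linarith
      · rw [min_eq_right h] at hminlt
        norm_num at hminlt
    have hdiff : |A N ((k:ℝ)/N) i j - Alim ((k:ℝ)/N) i j| ≤ 1/2 := by
      have := entry_le_frobNorm (A N ((k:ℝ)/N) - Alim ((k:ℝ)/N)) i j
      rw [Matrix.sub_apply] at this
      linarith
    have hA : |Alim ((k:ℝ)/N) i j| ≤ M := hM ((k:ℝ)/N) ⟨hk0, hkT⟩ i j
    have habs : |A N ((k:ℝ)/N) i j| ≤
        |A N ((k:ℝ)/N) i j - Alim ((k:ℝ)/N) i j| + |Alim ((k:ℝ)/N) i j| := by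
      have := abs_add_le (A N ((k:ℝ)/N) i j - Alim ((k:ℝ)/N) i j) (Alim ((k:ℝ)/N) i j)
      simpa using this
    calc |A N ((k:ℝ)/N) i j| ≤ 1/2 + M := by linarith
      _ ≤ M + 1 := by linarith
      _ ≤ max (max (M + 1) (N₀ : ℝ)) 0 := le_trans (le_max_left _ _) (le_max_left _ _)

  · -- small N
    have hNle : |A N ((k:ℝ)/N) i j| ≤ (N:ℝ) :=
      entries_le_of_stochastic (A N ((k:ℝ)/N)) N hN (hstoch N hN k) i j
    have : (N : ℝ) ≤ (N₀ : ℝ) := by exact_mod_cast le_of_lt hcase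
    calc |A N ((k:ℝ)/N) i j| ≤ (N:ℝ) := hNle
      _ ≤ (N₀ : ℝ) := this
      _ ≤ max (max (M + 1) (N₀ : ℝ)) 0 := le_trans (le_max_right _ _) (le_max_left _ _)


/-- For every C² function `f` and `T > 0`: boundedness
`sup_(N≥1) sup_(0≤t≤T) sup_(p ∈ K_N) |N(S_(N,[Nt])f(p) − f(p))| < ∞` and convergence
`lim_N sup_(0≤t≤T) sup_(p ∈ K_N) |S_(N,[Nt])f(p) − f(p)| = 0`. -/
theorem internal_dynamics_increment_bound_C2
    (r : ℕ) (hr : 2 ≤ r)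
    (A : ℕ → ℝ → Matrix (Fin r) (Fin r) ℝ)
    (Alim : ℝ → Matrix (Fin r) (Fin r) ℝ)
    (hQ : ∀ N : ℕ, 1 ≤ N → ∀ t : ℝ, 0 ≤ t → IsQMatrix (A N t))
    (hstepwise : ∀ N : ℕ, 1 ≤ N → ∀ k : ℕ, ∀ t : ℝ,
      (k : ℝ) / N ≤ t → t < ((k : ℝ) + 1) / N → A N t = A N ((k : ℝ) / N))
    (hQlim : ∀ t : ℝ, 0 ≤ t → IsQMatrix (Alim t))
    (hcadlag_right : ∀ t : ℝ, 0 ≤ t → ContinuousWithinAt Alim (Set.Ici t) t)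
    (hcadlag_left : ∀ t : ℝ, 0 < t →
      ∃ L, Filter.Tendsto Alim (nhdsWithin t (Set.Iio t)) (nhds L))
    (hstoch : ∀ N : ℕ, 1 ≤ N → ∀ k : ℕ,
      IsStochastic (1 + ((N : ℝ))⁻¹ • A N ((k : ℝ) / N)))
    (hconv : Filter.Tendsto (fun N => dU (A N) Alim) Filter.atTop (nhds 0))
    (f : (Fin r → ℝ) → ℝ) (hf : ContDiff ℝ 2 f) (T : ℝ) (hT : 0 < T) :
    (∃ C : ℝ, ∀ N : ℕ, 1 ≤ N → ∀ t : ℝ, 0 ≤ t → t ≤ T →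
      ∀ n : Fin r → ℕ, ∑ i, n i = N →
        |(N : ℝ) * (SOp N (1 + ((N : ℝ))⁻¹ • A N ((⌊(N : ℝ) * t⌋₊ : ℝ) / N)) f n
              - f fun i => (n i : ℝ) / N)| ≤ C) ∧
    (∀ ε > 0, ∃ N₀ : ℕ, ∀ N : ℕ, N₀ ≤ N → 1 ≤ N → ∀ t : ℝ, 0 ≤ t → t ≤ T →
      ∀ n : Fin r → ℕ, ∑ i, n i = N →
        |SOp N (1 + ((N : ℝ))⁻¹ • A N ((⌊(N : ℝ) * t⌋₊ : ℝ) / N)) f n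
              - f (fun i => (n i : ℝ) / N)| < ε) := by
  obtain ⟨L, hL, hLip⟩ := lip_of_contDiff f hf
  obtain ⟨CA, hCA0, hCA⟩ := master_entry_bound A Alim hcadlag_right hcadlag_left hstoch hconv T hT
  have main : ∀ N : ℕ, 1 ≤ N → ∀ t : ℝ, 0 ≤ t → t ≤ T → ∀ n : Fin r → ℕ, ∑ i, n i = N →
      |SOp N (1 + ((N : ℝ))⁻¹ • A N ((⌊(N : ℝ) * t⌋₊ : ℝ) / N)) f n
        - f (fun i => (n i : ℝ) / N)| ≤ 2 * L * r * (CA / N) := by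
    intro N hN t ht htT n hn
    have hNpos : (0:ℝ) < N := by exact_mod_cast hN
    set k := ⌊(N : ℝ) * t⌋₊ with hk
    have hkT : (k : ℝ) / N ≤ T := by
      have h1 : (k : ℝ) ≤ (N : ℝ) * t := Nat.floor_le (by positivity)
      rw [div_le_iff₀ hNpos]
      have h2 : (N:ℝ) * t ≤ (N:ℝ) * T := mul_le_mul_of_nonneg_left htT (le_of_lt hNpos)
      linarith
    have hP : IsStochastic (1 + ((N : ℝ))⁻¹ • A N ((k : ℝ) / N)) := hstoch N hN k
    have hPoff : ∀ i j, i ≠ j → (1 + ((N : ℝ))⁻¹ • A N ((k : ℝ) / N)) i j ≤ CA / N := by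
      intro i j hij
      have happ : (1 + ((N : ℝ))⁻¹ • A N ((k : ℝ) / N)) i j
          = (if i = j then (1:ℝ) else 0) + (N:ℝ)⁻¹ * A N ((k : ℝ) / N) i j := by
        rw [Matrix.add_apply, Matrix.smul_apply, Matrix.one_apply]
        simp [smul_eq_mul]
      rw [happ, if_neg hij, zero_add, div_eq_inv_mul CA (N:ℝ)]
      exact mul_le_mul_of_nonneg_left
        (le_trans (le_abs_self _) (hCA N hN k hkT i j))
        (inv_nonneg.mpr (le_of_lt hNpos))
    exact core_bound f N hN _ hP (CA / N) (by positivity) hPoff L hL hLip n hn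
  constructor
  · refine ⟨2 * L * r * CA, ?_⟩
    intro N hN t ht htT n hn
    have hNpos : (0:ℝ) < N := by exact_mod_cast hN
    have hmain := main N hN t ht htT n hn
    calc |(N : ℝ) * (SOp N (1 + ((N : ℝ))⁻¹ • A N ((⌊(N : ℝ) * t⌋₊ : ℝ) / N)) f n
            - f fun i => (n i : ℝ) / N)|
        = (N : ℝ) * |SOp N (1 + ((N : ℝ))⁻¹ • A N ((⌊(N : ℝ) * t⌋₊ : ℝ) / N)) f n
            - f fun i => (n i : ℝ) / N| := by
          rw [abs_mul, abs_of_pos hNpos]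
      _ ≤ (N : ℝ) * (2 * L * r * (CA / N)) :=
          mul_le_mul_of_nonneg_left hmain (le_of_lt hNpos)
      _ = 2 * L * r * CA := by
          field_simp
  · intro ε hε
    set C := 2 * L * r * CA with hC
    have hC0 : 0 ≤ C := by positivity
    refine ⟨⌈C / ε⌉₊ + 1, ?_⟩
    intro N hN₀ hN t ht htT n hn
    have hNpos : (0:ℝ) < N := by exact_mod_cast hN
    have hmain := main N hN t ht htT n hn
    have heq : 2 * L * r * (CA / N) = C / N := by
      rw [hC]; ring
    rw [heq] at hmain
    refine lt_of_le_of_lt hmain ?_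
    have hNgt : C / ε < (N : ℝ) := by
      have h1 : C / ε ≤ (⌈C / ε⌉₊ : ℝ) := Nat.le_ceil _
      have h2 : ((⌈C / ε⌉₊ + 1 : ℕ) : ℝ) ≤ (N : ℝ) := by exact_mod_cast hN₀
      push_cast at h2
      linarith
    rw [div_lt_iff₀ hNpos]
    have := (div_lt_iff₀ hε).mp hNgt
    linarith
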